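/- In the binary-partition enumeration of connected bipartite vertex sets with a degeneracy ordering, each vertex v in the current candidate set C(S, G) has at most one larger neighbor belonging to S, where S is any connected bipartite vertex set reachable by the algorithm (i.e., built by repeatedly adding the child generator and restricting to G(S', ≥u) at each step). -/

import Mathlib

variable {V : Type*}

def IsBipartition (G : SimpleGraph V) (L R : Set V) : Prop :=
  (∀ v, v ∈ L ∨ v ∈ R) ∧ (∀ v, ¬(v ∈ L ∧ v ∈ R)) ∧
    ∀ u v, G.Adj u v → (u ∈ L ∧ v ∈ R) ∨ (u ∈ R ∧ v ∈ L)

def IsBip (G : SimpleGraph V) : Prop := ∃ L R : Set V, IsBipartition G L R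

/-- `S` is a connected bipartite vertex set of `G`. -/
def CBVS (G : SimpleGraph V) (S : Set V) : Prop :=
  (G.induce S).Connected ∧ IsBip (G.induce S)

/-- Child generators of `S` in the induced subgraph `G[A]`: vertices `w ∈ A`, `w ∉ S`,
such that `S ∪ {w}` is a connected bipartite vertex set. -/
def CSetIn (G : SimpleGraph V) (A S : Set V) : Set V :=
  {w | w ∈ A ∧ w ∉ S ∧ CBVS G (S ∪ {w})}

/-- The states `(S, A)` reachable by the binary-partition enumeration algorithm:
starting from a singleton `{v}` in the whole graph, repeatedly add a chosen child
generator `u` to the current set and delete from the current graph all child generators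
smaller than `u`. -/
inductive Reach [LinearOrder V] (G : SimpleGraph V) : Set V → Set V → Prop
  | base (v : V) : Reach G {v} Set.univ
  | step (S A : Set V) (u : V) (h : Reach G S A) (hu : u ∈ CSetIn G A S) :
      Reach G (S ∪ {u}) (A \ {w | w ∈ CSetIn G A S ∧ w < u})

/-- An induced subgraph on a smaller set of a bipartite induced subgraph is bipartite. -/
lemma isBip_mono {G : SimpleGraph V} {S T : Set V} (hST : S ⊆ T)
    (h : IsBip (G.induce T)) : IsBip (G.induce S) := by
  obtain ⟨L, R, hLR, hdisj, hadj⟩ := h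
  refine ⟨{x | (⟨x.1, hST x.2⟩ : T) ∈ L}, {x | (⟨x.1, hST x.2⟩ : T) ∈ R}, ?_, ?_, ?_⟩
  · intro x; exact hLR _
  · intro x; exact hdisj _
  · intro x y hxy
    exact hadj ⟨x.1, hST x.2⟩ ⟨y.1, hST y.2⟩ hxy

lemma cbvs_singleton (G : SimpleGraph V) (v : V) : CBVS G {v} := by
  constructor
  · rw [SimpleGraph.induce_singleton_eq_top]
    have hne : Nonempty ({v} : Set V) := ⟨⟨v, rfl⟩⟩
    exact ⟨fun x y => by rw [Subsingleton.elim x y]⟩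
  · exact ⟨Set.univ, ∅, fun x => Or.inl (Set.mem_univ x), fun x h => h.2,
      fun x y hxy => absurd (Subsingleton.elim x y) hxy.ne⟩

lemma cbvs_of_reach [LinearOrder V] {G : SimpleGraph V} {S A : Set V}
    (h : Reach G S A) : CBVS G S := by
  induction h with
  | base v => exact cbvs_singleton G v
  | step S A u h hu ih => exact hu.2.2

/-- If `S` induces a connected graph, `t ∈ S` and `v` is adjacent to `t`,
then `S ∪ {v}` induces a connected graph. -/
lemma connected_insert {G : SimpleGraph V} {S : Set V} {t v : V}
    (hconn : (G.induce S).Connected) (ht : t ∈ S) (hadj : G.Adj t v) :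
    (G.induce (S ∪ {v})).Connected := by
  have h2 : (G.induce {t, v}).Connected := SimpleGraph.induce_pair_connected_of_adj hadj
  have := SimpleGraph.induce_union_connected hconn.preconnected h2.preconnected ⟨t, ht, Or.inl rfl⟩
  have hset : S ∪ {t, v} = S ∪ {v} := by
    ext x; simp only [Set.mem_union, Set.mem_insert_iff, Set.mem_singleton_iff]
    constructor
    · rintro (h | h | h)
      · exact Or.inl h
      · exact Or.inl (h ▸ ht)
      · exact Or.inr h
    · rintro (h | h)
      · exact Or.inl h
      · exact Or.inr (Or.inr h)
  rwa [hset] at this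

/-- If `v` is a child generator of `S ∪ {u}` in the restricted graph and has a larger
neighbor `t ∈ S`, then `v` was already a child generator of `S`. -/
lemma csetin_back [LinearOrder V] {G : SimpleGraph V} {S A : Set V} {u v t : V}
    (hreach : Reach G S A)
    (hv : v ∈ CSetIn G (A \ {w | w ∈ CSetIn G A S ∧ w < u}) (S ∪ {u}))
    (ht : t ∈ S) (hadj : G.Adj v t) : v ∈ CSetIn G A S := by
  obtain ⟨hvA, hvS, hcbvs⟩ := hv
  refine ⟨hvA.1, fun hvS' => hvS (Or.inl hvS'), ?_, ?_⟩
  · exact connected_insert (cbvs_of_reach hreach).1 ht hadj.symm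
  · refine isBip_mono ?_ hcbvs.2
    intro x hx
    rcases hx with h | h
    · exact Or.inl (Or.inl h)
    · exact Or.inr h

/-- In the binary-partition enumeration, for any reachable state `(S, A)` and any vertex
`v` in the current candidate set (child generators of `S` in `G[A]`), `v` has at most one
neighbor in `S` that is larger than `v`. -/
theorem stmt_14 [Fintype V] [LinearOrder V] (G : SimpleGraph V) (S A : Set V)
    (h : Reach G S A) (v : V) (hv : v ∈ CSetIn G A S) :
    {s ∈ S | G.Adj v s ∧ v < s}.ncard ≤ 1 := by
  induction h with
  | base w =>
    have : {s ∈ ({w} : Set V) | G.Adj v s ∧ v < s} ⊆ {w} := fun x hx => hx.1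
    calc {s ∈ ({w} : Set V) | G.Adj v s ∧ v < s}.ncard
        ≤ ({w} : Set V).ncard := Set.ncard_le_ncard this (Set.finite_singleton w)
      _ = 1 := Set.ncard_singleton w
  | step S A u hreach hu ih =>
    rw [Set.ncard_le_one_iff_eq]
    by_contra hne
    push_neg at hne
    obtain ⟨hemp, hns⟩ := hne
    -- the set has at least two elements
    have h2 : ∃ a ∈ {s ∈ S ∪ {u} | G.Adj v s ∧ v < s}, ∃ b ∈ {s ∈ S ∪ {u} | G.Adj v s ∧ v < s}, a ≠ b := by
      by_contra hc
      push_neg at hc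
      obtain ⟨a, ha⟩ := hemp
      exact hns a (Set.eq_singleton_iff_unique_mem.mpr ⟨ha, fun b hb => hc b hb a ha⟩)
    obtain ⟨a, ha, b, hb, hab⟩ := h2
    -- one of a, b is in S
    have hone : ∃ t ∈ S, G.Adj v t ∧ v < t := by
      rcases ha.1 with h | h
      · exact ⟨a, h, ha.2⟩
      · rcases hb.1 with h' | h'
        · exact ⟨b, h', hb.2⟩
        · exact absurd (h.trans h'.symm) hab
    obtain ⟨t, htS, htadj, htlt⟩ := hone
    have hvold : v ∈ CSetIn G A S := csetin_back hreach hv htS htadj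
    -- case: both in S, or one is u
    by_cases hua : a = u
    · -- then v < u, so v was deleted
      have hvlt : v < u := hua ▸ ha.2.2
      exact hv.1.2 ⟨hvold, hvlt⟩
    · by_cases hub : b = u
      · have hvlt : v < u := hub ▸ hb.2.2
        exact hv.1.2 ⟨hvold, hvlt⟩
      · -- both a, b in S: contradicts IH
        have haS : a ∈ S := ha.1.resolve_right hua
        have hbS : b ∈ S := hb.1.resolve_right hub
        have := ih hvold
        rw [Set.ncard_le_one_iff_eq] at this
        rcases this with h0 | ⟨c, hc⟩
        · exact absurd (by have hmem : a ∈ {s ∈ S | G.Adj v s ∧ v < s} := ⟨haS, ha.2⟩; rw [h0] at hmem; exact hmem) (Set.notMem_empty a)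
        · have ha' : a = c := by have : a ∈ {s ∈ S | G.Adj v s ∧ v < s} := ⟨haS, ha.2⟩; rwa [hc] at this
          have hb' : b = c := by have : b ∈ {s ∈ S | G.Adj v s ∧ v < s} := ⟨hbS, hb.2⟩; rwa [hc] at this
          exact hab (ha'.trans hb'.symm)
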